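/- Let d ≥ 2 be an integer and L, r_0 > 0. Let B : (r_0, ∞) → ℝ be a measurable function with B(ρ) ≥ L²/ρ² for all ρ > r_0, and suppose ℓ := 2L ∫_{r_0}^∞ √(B(ρ)) / (ρ · √((ρ/r_0)^(2d−2) − 1)) dρ is finite. Then ℓ ≥ (2L²/r_0) · √π · Γ(d/(2(d−1))) / Γ(1/(2(d−1))), i.e. L²/r_0 ≤ [Γ(1/(2(d−1))) / (2√π Γ(d/(2(d−1))))] · ℓ, with equality when B(ρ) = L²/ρ² for all ρ. In particular r_0 ≥ r_{0,vac}, where r_{0,vac} := (2L²/ℓ) · √π Γ(d/(2(d−1))) / Γ(1/(2(d−1))) is the value of r_0 produced by B(ρ) = L²/ρ² at the same ℓ. -/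

import Mathlib

open MeasureTheory

open Set

section StripTipRadiusAux

lemma real_beta {a b : ℝ} (ha : 0 < a) (hb : 0 < b) :
    ∫ x in Set.Ioo (0:ℝ) 1, x ^ (a - 1) * (1 - x) ^ (b - 1) =
      Real.Gamma a * Real.Gamma b / Real.Gamma (a + b) := by
  have hab : (0:ℝ) < Real.Gamma (a + b) := Real.Gamma_pos_of_pos (by linarith)
  have h := Complex.Gamma_mul_Gamma_eq_betaIntegral (s := (a:ℂ)) (t := (b:ℂ))
      (by simpa using ha) (by simpa using hb)
  have hbeta : Complex.betaIntegral a b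
      = ((∫ x in Set.Ioo (0:ℝ) 1, x ^ (a - 1) * (1 - x) ^ (b - 1) : ℝ) : ℂ) := by
    rw [Complex.betaIntegral, intervalIntegral.integral_of_le zero_le_one,
        MeasureTheory.integral_Ioc_eq_integral_Ioo]
    have : ∀ x ∈ Set.Ioo (0:ℝ) 1, (x:ℂ) ^ ((a:ℂ) - 1) * (1 - (x:ℂ)) ^ ((b:ℂ) - 1)
        = ((x ^ (a - 1) * (1 - x) ^ (b - 1) : ℝ) : ℂ) := by
      intro x hx
      obtain ⟨hx0, hx1⟩ := hx
      rw [Complex.ofReal_mul, Complex.ofReal_cpow hx0.le,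
          Complex.ofReal_cpow (by linarith : (0:ℝ) ≤ 1 - x)]
      push_cast
      ring
    rw [setIntegral_congr_fun measurableSet_Ioo this]; exact integral_ofReal
  rw [hbeta, ← Complex.ofReal_add, Complex.Gamma_ofReal, Complex.Gamma_ofReal,
      Complex.Gamma_ofReal, ← Complex.ofReal_mul, ← Complex.ofReal_mul] at h
  have h' := Complex.ofReal_inj.mp h
  rw [eq_div_iff hab.ne']
  linarith [h']


lemma deriv_aux (n : ℕ) (hn : 1 ≤ n) (r₀ ρ : ℝ) (hρ : ρ ≠ 0) :
    HasDerivAt (fun x : ℝ => (r₀ / x) ^ n) (-(n:ℝ) * r₀ ^ n / ρ ^ (n + 1)) ρ := by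
  obtain ⟨k, rfl⟩ : ∃ k, n = k + 1 := ⟨n - 1, by omega⟩
  have h1 : HasDerivAt (fun x : ℝ => x ^ (k + 1)) (((k:ℝ) + 1) * ρ ^ k) ρ := by
    simpa using hasDerivAt_pow (k + 1) ρ
  have h2 := (h1.inv (pow_ne_zero _ hρ)).const_mul (r₀ ^ (k + 1))
  have hfun : (fun x : ℝ => (r₀ / x) ^ (k + 1))
      = fun x : ℝ => r₀ ^ (k + 1) * (x ^ (k + 1))⁻¹ := by
    funext x; rw [div_pow, div_eq_mul_inv]
  rw [hfun]
  have h3 : HasDerivAt (fun x : ℝ => r₀ ^ (k + 1) * (x ^ (k + 1))⁻¹)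
      (r₀ ^ (k + 1) * (-((k + 1) * ρ ^ k) / (ρ ^ (k + 1)) ^ 2)) ρ := h2
  convert h3 using 1
  field_simp
  push_cast
  ring


lemma vac_integral (m : ℕ) (hm : 1 ≤ m) (L r₀ : ℝ) (hL : 0 < L) (hr₀ : 0 < r₀) :
    ∫ ρ in Set.Ioi r₀, (L / ρ) / (ρ * Real.sqrt ((ρ / r₀) ^ (2 * m) - 1))
      = L / r₀ * Real.sqrt Real.pi * Real.Gamma (1 / (2 * m) + 1 / 2) /
          Real.Gamma (1 / (2 * m)) := by
  have hm0 : (0:ℝ) < (m:ℝ) := by exact_mod_cast hm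
  set c : ℝ := 1 / (2 * m) with hc_def
  have hc : 0 < c := by positivity
  have h2mc : (2 * (m:ℝ)) * c = 1 := by rw [hc_def]; field_simp
  have hn2m : 1 ≤ 2 * m := by omega
  set f : ℝ → ℝ := fun ρ => (r₀ / ρ) ^ (2 * m) with hf_def
  set f' : ℝ → ℝ := fun ρ => -(2*m : ℝ) * r₀ ^ (2*m) / ρ ^ (2*m + 1) with hf'_def
  have hf' : ∀ ρ ∈ Set.Ioi r₀, HasDerivWithinAt f (f' ρ) (Set.Ioi r₀) ρ := by
    intro ρ hρ
    have : ρ ≠ 0 := (hr₀.trans hρ).ne'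
    have h := deriv_aux (2*m) hn2m r₀ ρ this
    simpa [f, f'] using h.hasDerivWithinAt
  have hinj : InjOn f (Set.Ioi r₀) := by
    apply StrictAntiOn.injOn
    intro x hx y hy hxy
    have hx0 : 0 < x := hr₀.trans hx
    have hy0 : 0 < y := hr₀.trans hy
    have h1 : r₀ / y < r₀ / x := div_lt_div_of_pos_left hr₀ hx0 hxy
    exact pow_lt_pow_left₀ h1 (div_pos hr₀ hy0).le (by omega)
  have himg : f '' Set.Ioi r₀ = Set.Ioo 0 1 := by
    ext y
    constructor
    · rintro ⟨ρ, hρ, rfl⟩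
      have hρ0 : 0 < ρ := hr₀.trans hρ
      have h1 : 0 < r₀ / ρ := by positivity
      have h2 : r₀ / ρ < 1 := (div_lt_one hρ0).mpr hρ
      exact ⟨pow_pos h1 _, pow_lt_one₀ h1.le h2 (by omega)⟩
    · rintro ⟨hy0, hy1⟩
      have hyc : (0:ℝ) < y ^ (-c) := Real.rpow_pos_of_pos hy0 _
      have hyc1 : 1 < y ^ (-c) :=
        (Real.one_lt_rpow_iff_of_pos hy0).mpr (Or.inr ⟨hy1, by linarith⟩)
      refine ⟨r₀ * y ^ (-c), ?_, ?_⟩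
      · have := mul_lt_mul_of_pos_left hyc1 hr₀
        simpa using this
      · have hrat : r₀ / (r₀ * y ^ (-c)) = y ^ c := by
          rw [Real.rpow_neg hy0.le]
          have : y ^ c ≠ 0 := (Real.rpow_pos_of_pos hy0 c).ne'
          field_simp
        show (r₀ / (r₀ * y ^ (-c))) ^ (2 * m) = y
        rw [hrat, ← Real.rpow_natCast (y ^ c) (2*m), ← Real.rpow_mul hy0.le]
        rw [show c * ((2*m : ℕ) : ℝ) = 1 by push_cast; linarith [h2mc]]
        exact Real.rpow_one y
  set g : ℝ → ℝ := fun t => t ^ (c + 1/2 - 1) * (1 - t) ^ ((1:ℝ)/2 - 1) with hg_def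
  have hpt : ∀ ρ ∈ Set.Ioi r₀, |f' ρ| • g (f ρ)
      = (2 * m * r₀ / L) * ((L / ρ) / (ρ * Real.sqrt ((ρ / r₀) ^ (2 * m) - 1))) := by
    intro ρ hρ
    have hρ0 : 0 < ρ := hr₀.trans hρ
    set u : ℝ := ρ / r₀ with hu_def
    have hu1 : 1 < u := (one_lt_div hr₀).mpr hρ
    have hu0 : 0 < u := by linarith
    have hU1 : 1 < u ^ (2*m) := one_lt_pow₀ hu1 (by omega)
    have hU0 : 0 < u ^ (2*m) := by positivity
    set X : ℝ := u ^ (2*m) - 1 with hX_def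
    have hX0 : 0 < X := by simp [hX_def]; linarith
    have hsX : 0 < Real.sqrt X := Real.sqrt_pos.mpr hX0
    -- f ρ = (u^(2m))⁻¹
    have hfρ : f ρ = (u ^ (2*m))⁻¹ := by
      simp only [f]
      rw [show r₀ / ρ = u⁻¹ by rw [hu_def, inv_div], inv_pow]
    have ht0 : 0 < f ρ := by rw [hfρ]; positivity
    -- sqrt (u^(2m)) = u^m
    have hsqU : Real.sqrt (u ^ (2*m)) = u ^ m := by
      rw [show 2*m = m*2 by ring, pow_mul]
      exact Real.sqrt_sq (by positivity)
    -- piece 1 : (f ρ) ^ (c - 1/2 + ...) decomposition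
    have hp1 : f ρ ^ (c + 1/2 - 1) = u⁻¹ * u ^ m := by
      rw [show c + 1/2 - 1 = c + (-(1/2) : ℝ) by ring,
          Real.rpow_add ht0]
      congr 1
      · rw [hfρ, ← inv_pow, ← Real.rpow_natCast (u⁻¹) (2*m),
            ← Real.rpow_mul (by positivity : (0:ℝ) ≤ u⁻¹),
            show ((2*m : ℕ) : ℝ) * c = 1 by push_cast; linarith [h2mc],
            Real.rpow_one]
      · rw [Real.rpow_neg ht0.le, hfρ]
        rw [show ((u:ℝ)^(2*m))⁻¹ ^ ((1:ℝ)/2) = ((u ^ (2*m) : ℝ) ^ ((1:ℝ)/2))⁻¹ by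
          rw [← Real.inv_rpow (by positivity)]]
        rw [← Real.rpow_natCast u (2*m)] at hsqU ⊢
        rw [← Real.sqrt_eq_rpow] at *
        rw [hsqU]
        simp
    -- piece 2
    have hp2 : (1 - f ρ) ^ ((1:ℝ)/2 - 1) = u ^ m / Real.sqrt X := by
      have h1t : 1 - f ρ = X / u ^ (2*m) := by
        rw [hfρ, hX_def]; field_simp
      rw [h1t, show (1:ℝ)/2 - 1 = -(1/2) by ring, Real.rpow_neg (by positivity),
          ← Real.sqrt_eq_rpow, Real.sqrt_div hX0.le, hsqU]
      exact inv_div _ _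
    have habs : |f' ρ| = (2*m : ℝ) * r₀ ^ (2*m) / ρ ^ (2*m+1) := by
      have hle : f' ρ ≤ 0 := by
        simp only [f']
        apply div_nonpos_of_nonpos_of_nonneg
        · have : (0:ℝ) ≤ (2*m : ℝ) * r₀ ^ (2*m) := by positivity
          linarith
        · positivity
      rw [abs_of_nonpos hle]
      simp only [f']
      ring
    rw [smul_eq_mul, habs, hg_def]
    simp only []
    rw [hp1, hp2]
    simp only [hu_def]
    field_simp
    rw [← pow_mul, div_pow, mul_comm m 2, pow_succ]
    field_simp
  have key := integral_image_eq_integral_abs_deriv_smul measurableSet_Ioi hf' hinj g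
  rw [himg] at key
  rw [setIntegral_congr_fun measurableSet_Ioi hpt, MeasureTheory.integral_const_mul] at key
  have hbeta := real_beta (a := c + 1/2) (b := (1:ℝ)/2) (by positivity) (by norm_num)
  rw [hg_def] at key
  rw [hbeta] at key
  have hK : (2*(m:ℝ)*r₀/L) ≠ 0 := by positivity
  have hI' := key.symm
  rw [mul_comm] at hI'
  have hI := (eq_div_iff hK).mpr hI'
  rw [hI, show c + 1/2 + 1/2 = c + 1 by ring, Real.Gamma_add_one hc.ne',
      Real.Gamma_one_half_eq]
  have hΓc : 0 < Real.Gamma c := Real.Gamma_pos_of_pos hc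
  have hΓa : 0 < Real.Gamma (c + 1/2) := Real.Gamma_pos_of_pos (by positivity)
  rw [hc_def]
  have h2m : (2*(m:ℝ)) ≠ 0 := by positivity
  field_simp

end StripTipRadiusAux

/-- Tip-radius bound for the HRT surface of a strip of width
`ℓ = 2L ∫_{r₀}^∞ √B(ρ)/(ρ √((ρ/r₀)^(2d−2) − 1)) dρ` when `B(ρ) ≥ L²/ρ²`,
with equality for `B(ρ) = L²/ρ²`, and the consequence `r₀ ≥ r_{0,vac}`. -/
theorem strip_tip_radius_bound
    (d : ℕ) (hd : 2 ≤ d) (L r₀ : ℝ) (hL : 0 < L) (hr₀ : 0 < r₀)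
    (B : ℝ → ℝ) (hBmeas : Measurable B)
    (hBlb : ∀ ρ ∈ Set.Ioi r₀, L ^ 2 / ρ ^ 2 ≤ B ρ)
    (hInt : IntegrableOn
      (fun ρ : ℝ => Real.sqrt (B ρ) / (ρ * Real.sqrt ((ρ / r₀) ^ (2 * d - 2) - 1)))
      (Set.Ioi r₀))
    (ℓ : ℝ)
    (hℓ : ℓ = 2 * L * ∫ ρ in Set.Ioi r₀,
      Real.sqrt (B ρ) / (ρ * Real.sqrt ((ρ / r₀) ^ (2 * d - 2) - 1))) :
    (2 * L ^ 2 / r₀) * Real.sqrt Real.pi *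
        Real.Gamma ((d : ℝ) / (2 * ((d : ℝ) - 1))) /
        Real.Gamma (1 / (2 * ((d : ℝ) - 1))) ≤ ℓ ∧
    L ^ 2 / r₀ ≤ (Real.Gamma (1 / (2 * ((d : ℝ) - 1))) /
        (2 * Real.sqrt Real.pi * Real.Gamma ((d : ℝ) / (2 * ((d : ℝ) - 1))))) * ℓ ∧
    ((∀ ρ ∈ Set.Ioi r₀, B ρ = L ^ 2 / ρ ^ 2) →
      ℓ = (2 * L ^ 2 / r₀) * Real.sqrt Real.pi *
        Real.Gamma ((d : ℝ) / (2 * ((d : ℝ) - 1))) /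
        Real.Gamma (1 / (2 * ((d : ℝ) - 1)))) ∧
    (2 * L ^ 2 / ℓ) * Real.sqrt Real.pi *
        Real.Gamma ((d : ℝ) / (2 * ((d : ℝ) - 1))) /
        Real.Gamma (1 / (2 * ((d : ℝ) - 1))) ≤ r₀ := by
  set m : ℕ := d - 1 with hm_def
  have hm1 : 1 ≤ m := by omega
  have hm0 : (0:ℝ) < (m:ℝ) := by exact_mod_cast hm1
  have h2d : 2 * d - 2 = 2 * m := by omega
  have hdm : (d:ℝ) = (m:ℝ) + 1 := by
    have : d = m + 1 := by omega
    rw [this]; push_cast; ring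
  have hargs1 : 1 / (2 * ((d:ℝ) - 1)) = 1 / (2 * (m:ℝ)) := by rw [hdm]; ring_nf
  have hargs2 : (d:ℝ) / (2 * ((d:ℝ) - 1)) = 1 / (2 * (m:ℝ)) + 1/2 := by
    rw [hdm]; field_simp [hm0.ne']; ring
  simp only [h2d] at hInt hℓ
  set F : ℝ → ℝ :=
    fun ρ => Real.sqrt (B ρ) / (ρ * Real.sqrt ((ρ / r₀) ^ (2 * m) - 1)) with hF_def
  set gvac : ℝ → ℝ :=
    fun ρ => (L / ρ) / (ρ * Real.sqrt ((ρ / r₀) ^ (2 * m) - 1)) with hg_def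
  -- pointwise facts
  have hpt : ∀ ρ ∈ Set.Ioi r₀, 0 ≤ gvac ρ ∧ gvac ρ ≤ F ρ ∧ 0 ≤ F ρ := by
    intro ρ hρ
    have hρ0 : 0 < ρ := hr₀.trans hρ
    have hu1 : 1 < ρ / r₀ := (one_lt_div hr₀).mpr hρ
    have hX0 : 0 < (ρ / r₀) ^ (2 * m) - 1 := by
      have := one_lt_pow₀ hu1 (by omega : 2 * m ≠ 0)
      linarith
    have hden : 0 < ρ * Real.sqrt ((ρ / r₀) ^ (2 * m) - 1) :=
      mul_pos hρ0 (Real.sqrt_pos.mpr hX0)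
    have hnum : L / ρ ≤ Real.sqrt (B ρ) := by
      have h1 : Real.sqrt (L ^ 2 / ρ ^ 2) = L / ρ := by
        rw [show L ^ 2 / ρ ^ 2 = (L / ρ) ^ 2 by rw [div_pow],
          Real.sqrt_sq (by positivity)]
      rw [← h1]
      exact Real.sqrt_le_sqrt (hBlb ρ hρ)
    refine ⟨by positivity, ?_, ?_⟩
    · exact div_le_div_of_nonneg_right hnum hden.le
    · exact div_nonneg (Real.sqrt_nonneg _) hden.le
  -- integrability of the vacuum integrand
  have hmeas : Measurable gvac := by
    apply Measurable.div
    · exact measurable_const.div measurable_id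
    · exact measurable_id.mul
        ((Real.continuous_sqrt.measurable).comp
          (((measurable_id.div_const r₀).pow_const (2*m)).sub measurable_const))
  have hIntvac : IntegrableOn gvac (Set.Ioi r₀) := by
    apply Integrable.mono hInt hmeas.aestronglyMeasurable.restrict
    filter_upwards [ae_restrict_mem measurableSet_Ioi] with ρ hρ
    obtain ⟨h1, h2, h3⟩ := hpt ρ hρ
    rw [Real.norm_eq_abs, Real.norm_eq_abs, abs_of_nonneg h1, abs_of_nonneg h3]
    exact h2
  have hmono : ∫ ρ in Set.Ioi r₀, gvac ρ ≤ ∫ ρ in Set.Ioi r₀, F ρ :=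
    setIntegral_mono_on hIntvac hInt measurableSet_Ioi
      (fun ρ hρ => (hpt ρ hρ).2.1)
  have hval := vac_integral m hm1 L r₀ hL hr₀
  have hΓa : 0 < Real.Gamma ((d:ℝ) / (2 * ((d:ℝ) - 1))) := by
    rw [hargs2]; exact Real.Gamma_pos_of_pos (by positivity)
  have hΓc : 0 < Real.Gamma (1 / (2 * ((d:ℝ) - 1))) := by
    rw [hargs1]; exact Real.Gamma_pos_of_pos (by positivity)
  have hπ : 0 < Real.sqrt Real.pi := Real.sqrt_pos.mpr Real.pi_pos
  -- claim 1
  have hEeq : (2 * L ^ 2 / r₀) * Real.sqrt Real.pi *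
      Real.Gamma ((d : ℝ) / (2 * ((d : ℝ) - 1))) /
      Real.Gamma (1 / (2 * ((d : ℝ) - 1)))
      = 2 * L * (L / r₀ * Real.sqrt Real.pi *
          Real.Gamma (1 / (2 * (m:ℝ)) + 1/2) / Real.Gamma (1 / (2 * (m:ℝ)))) := by
    rw [hargs1, hargs2]; ring
  have h1 : (2 * L ^ 2 / r₀) * Real.sqrt Real.pi *
      Real.Gamma ((d : ℝ) / (2 * ((d : ℝ) - 1))) /
      Real.Gamma (1 / (2 * ((d : ℝ) - 1))) ≤ ℓ := by
    rw [hℓ, hEeq, ← hval]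
    have := mul_le_mul_of_nonneg_left hmono (by positivity : (0:ℝ) ≤ 2 * L)
    simpa [hg_def, hF_def] using this
  refine ⟨h1, ?_, ?_, ?_⟩
  · -- claim 2
    have hpos : 0 < Real.Gamma (1 / (2 * ((d:ℝ) - 1))) /
        (2 * Real.sqrt Real.pi * Real.Gamma ((d:ℝ) / (2 * ((d:ℝ) - 1)))) := by
      positivity
    have h := mul_le_mul_of_nonneg_left h1 hpos.le
    calc L ^ 2 / r₀
        = Real.Gamma (1 / (2 * ((d:ℝ) - 1))) /
            (2 * Real.sqrt Real.pi * Real.Gamma ((d:ℝ) / (2 * ((d:ℝ) - 1)))) *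
          ((2 * L ^ 2 / r₀) * Real.sqrt Real.pi *
            Real.Gamma ((d : ℝ) / (2 * ((d : ℝ) - 1))) /
            Real.Gamma (1 / (2 * ((d : ℝ) - 1)))) := by
          field_simp
      _ ≤ _ := h
  · -- claim 3 : equality case
    intro hBeq
    have hcongr : ∀ ρ ∈ Set.Ioi r₀, F ρ = gvac ρ := by
      intro ρ hρ
      have hρ0 : 0 < ρ := hr₀.trans hρ
      have : Real.sqrt (B ρ) = L / ρ := by
        rw [hBeq ρ hρ, show L ^ 2 / ρ ^ 2 = (L / ρ) ^ 2 by rw [div_pow],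
          Real.sqrt_sq (by positivity)]
      simp only [hF_def, hg_def, this]
    rw [hℓ, setIntegral_congr_fun measurableSet_Ioi hcongr]
    rw [show (∫ ρ in Set.Ioi r₀, gvac ρ)
        = L / r₀ * Real.sqrt Real.pi * Real.Gamma (1 / (2 * (m:ℝ)) + 1/2) /
          Real.Gamma (1 / (2 * (m:ℝ))) from hval, hEeq]
  · -- claim 4
    have hE0 : 0 < (2 * L ^ 2 / r₀) * Real.sqrt Real.pi *
        Real.Gamma ((d : ℝ) / (2 * ((d : ℝ) - 1))) /
        Real.Gamma (1 / (2 * ((d : ℝ) - 1))) := by positivity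
    have hℓ0 : 0 < ℓ := lt_of_lt_of_le hE0 h1
    rw [show (2 * L ^ 2 / ℓ) * Real.sqrt Real.pi *
        Real.Gamma ((d : ℝ) / (2 * ((d : ℝ) - 1))) /
        Real.Gamma (1 / (2 * ((d : ℝ) - 1)))
        = (2 * L ^ 2 * Real.sqrt Real.pi *
          Real.Gamma ((d : ℝ) / (2 * ((d : ℝ) - 1))) /
          Real.Gamma (1 / (2 * ((d : ℝ) - 1)))) / ℓ by ring]
    rw [div_le_iff₀ hℓ0]
    rw [show (2 * L ^ 2 / r₀) * Real.sqrt Real.pi *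
        Real.Gamma ((d : ℝ) / (2 * ((d : ℝ) - 1))) /
        Real.Gamma (1 / (2 * ((d : ℝ) - 1)))
        = (2 * L ^ 2 * Real.sqrt Real.pi *
          Real.Gamma ((d : ℝ) / (2 * ((d : ℝ) - 1))) /
          Real.Gamma (1 / (2 * ((d : ℝ) - 1)))) / r₀ by ring] at h1
    rw [div_le_iff₀ hr₀] at h1
    nlinarith [h1, hℓ0, hr₀]
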